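/- Let H be a nonempty set of measurable NE approximators, D a probability measure on U, m ≥ 1, and ε ∈ (0,1). Suppose C is a nonempty finite set of measurable NE approximators of cardinality K that (ε/6)-covers H, and assume the set {S ∈ U^m : ∃h ∈ H, |L_S(h) − L_D(h)| > ε} is measurable with respect to the product measure D^m. Then P_{S∼D^m}[ ∃h ∈ H, |L_S(h) − L_D(h)| > ε ] ≤ 2·K·exp(−2·m·ε²/9). -/

import Mathlib

open Finset MeasureTheory

section NashDefs

variable {N : Type*} {A : N → Type*}

/-- `σ` is a mixed strategy profile: each `σ i` is a probability distribution on `A i`. -/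
def IsMixedProfile [∀ i, Fintype (A i)] (σ : ∀ i, A i → ℝ) : Prop :=
  (∀ i a, 0 ≤ σ i a) ∧ ∀ i, ∑ a, σ i a = 1

/-- Expected utility of player `i` when the mixed strategy profile `σ` is played:
`u_i(σ) = ∑_{a ∈ A} (∏_j σ_j(a_j)) u_i(a)`. -/
def expUtil [Fintype N] [DecidableEq N] [∀ i, Fintype (A i)]
    (u : N → (∀ j, A j) → ℝ) (i : N) (σ : ∀ j, A j → ℝ) : ℝ :=
  ∑ a : ∀ j, A j, (∏ j, σ j (a j)) * u i a

/-- The pure strategy of player `i` playing action `b` with probability one. -/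
def pureStrat [∀ i, DecidableEq (A i)] {i : N} (b : A i) : A i → ℝ :=
  fun c => if c = b then 1 else 0

/-- Nash approximation loss:
`NashApr(σ, u) = max_{i ∈ N} max_{b ∈ A_i} [u_i(b, σ_{-i}) - u_i(σ)]`. -/
noncomputable def nashApr [Fintype N] [DecidableEq N] [Nonempty N]
    [∀ i, Fintype (A i)] [∀ i, DecidableEq (A i)] [∀ i, Nonempty (A i)]
    (σ : ∀ i, A i → ℝ) (u : N → (∀ j, A j) → ℝ) : ℝ :=
  Finset.univ.sup' Finset.univ_nonempty fun i : N =>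
    Finset.univ.sup' Finset.univ_nonempty fun b : A i =>
      expUtil u i (Function.update σ i (pureStrat b)) - expUtil u i σ

/-- ℓ1-distance between mixed strategy profiles:
`‖σ - σ'‖₁ = ∑_{i ∈ N} ∑_{a_i ∈ A_i} |σ_i(a_i) - σ'_i(a_i)|`. -/
def dist1 [Fintype N] [∀ i, Fintype (A i)] (σ σ' : ∀ i, A i → ℝ) : ℝ :=
  ∑ i, ∑ a, |σ i a - σ' i a|

/-- ℓmax-distance between game utilities:
`‖u - v‖max = max_{i ∈ N} max_{a ∈ A} |u_i(a) - v_i(a)|`. -/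
noncomputable def distMax [Fintype N] [DecidableEq N] [Nonempty N]
    [∀ i, Fintype (A i)] [∀ i, Nonempty (A i)]
    (u v : N → (∀ j, A j) → ℝ) : ℝ :=
  Finset.univ.sup' Finset.univ_nonempty fun i : N =>
    Finset.univ.sup' Finset.univ_nonempty fun a : ∀ j, A j => |u i a - v i a|

end NashDefs

/-- The set of all game utilities (with values in `[0,1]`) for fixed players `N`
and action space `A`, as a subtype. -/
abbrev GameUtil (N : Type*) (A : N → Type*) : Type _ :=
  {u : N → (∀ j, A j) → ℝ // ∀ i a, u i a ∈ Set.Icc (0 : ℝ) 1}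

/-- An NE approximator maps game utilities to mixed strategy profiles. -/
abbrev NEApprox (N : Type*) (A : N → Type*) [∀ i, Fintype (A i)] : Type _ :=
  {h : GameUtil N A → ∀ i, A i → ℝ // ∀ u, IsMixedProfile (h u)}

section Risk

variable {N : Type*} {A : N → Type*} [Fintype N] [DecidableEq N] [Nonempty N]
  [∀ i, Fintype (A i)] [∀ i, DecidableEq (A i)] [∀ i, Nonempty (A i)]

/-- Nash approximation loss of an NE approximator on a game. -/
noncomputable def nashLoss (h : NEApprox N A) (u : GameUtil N A) : ℝ :=
  nashApr (h.1 u) u.1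

/-- True risk `L_D(h) = E_{u ∼ D}[NashApr(h(u), u)]`. -/
noncomputable def trueRisk (D : Measure (GameUtil N A)) (h : NEApprox N A) : ℝ :=
  ∫ u, nashLoss h u ∂D

/-- Empirical risk `L_S(h) = (1/m) ∑_j NashApr(h(u⁽ʲ⁾), u⁽ʲ⁾)`. -/
noncomputable def empRisk {m : ℕ} (S : Fin m → GameUtil N A) (h : NEApprox N A) : ℝ :=
  (1 / (m : ℝ)) * ∑ j, nashLoss h (S j)

/-- `C` `r`-covers `H` under the `ℓ_{∞,1}`-distance:
every `h ∈ H` is within `ℓ_{∞,1}`-distance `r` of some `g ∈ C`. -/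
def Covers (r : ℝ) (C : Finset (NEApprox N A)) (H : Set (NEApprox N A)) : Prop :=
  ∀ h ∈ H, ∃ g ∈ C, ∀ u, dist1 (h.1 u) (g.1 u) ≤ r

end Risk
set_option linter.unusedSectionVars false

section GameAux
variable {N : Type*} {A : N → Type*} [Fintype N] [DecidableEq N] [Nonempty N]
  [∀ i, Fintype (A i)] [∀ i, DecidableEq (A i)] [∀ i, Nonempty (A i)]

lemma sum_prod_pi (F : ∀ j, A j → ℝ) :
    ∑ a : ∀ j, A j, ∏ j, F j (a j) = ∏ j, ∑ b, F j b := by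
  rw [Finset.prod_univ_sum, Fintype.piFinset_univ]

lemma isMixed_update {σ : ∀ i, A i → ℝ} (h : IsMixedProfile σ) (i : N) (b : A i) :
    IsMixedProfile (Function.update σ i (pureStrat b)) := by
  constructor
  · intro j a
    rcases eq_or_ne j i with rfl | hj
    · simp only [Function.update_self, pureStrat]
      split <;> norm_num
    · simpa [Function.update_of_ne hj] using h.1 j a
  · intro j
    rcases eq_or_ne j i with rfl | hj
    · simp [pureStrat, Function.update_self]
    · simp [Function.update_of_ne hj, h.2 j]

lemma sum_prod_eq_one {σ : ∀ i, A i → ℝ} (h : IsMixedProfile σ) :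
    ∑ a : ∀ j, A j, ∏ j, σ j (a j) = 1 := by
  rw [sum_prod_pi]
  exact Finset.prod_eq_one fun j _ => h.2 j

variable {u : N → (∀ j, A j) → ℝ} {σ σ' : ∀ i, A i → ℝ}

lemma expUtil_nonneg (hu : ∀ i a, u i a ∈ Set.Icc (0:ℝ) 1) (hσ : IsMixedProfile σ) (i : N) :
    0 ≤ expUtil u i σ :=
  Finset.sum_nonneg fun a _ => mul_nonneg
    (Finset.prod_nonneg fun j _ => hσ.1 j (a j)) (hu i a).1

lemma expUtil_le_one (hu : ∀ i a, u i a ∈ Set.Icc (0:ℝ) 1) (hσ : IsMixedProfile σ) (i : N) :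
    expUtil u i σ ≤ 1 := by
  calc expUtil u i σ ≤ ∑ a : ∀ j, A j, (∏ j, σ j (a j)) * 1 := by
        refine Finset.sum_le_sum fun a _ => ?_
        exact mul_le_mul_of_nonneg_left (hu i a).2
          (Finset.prod_nonneg fun j _ => hσ.1 j (a j))
    _ = 1 := by simpa using sum_prod_eq_one hσ

lemma expUtil_eq_sum (i : N) :
    expUtil u i σ = ∑ b, σ i b * expUtil u i (Function.update σ i (pureStrat b)) := by
  have hprod : ∀ (b : A i) (a : ∀ j, A j),
      ∏ j, Function.update σ i (pureStrat b) j (a j)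
        = (if a i = b then 1 else 0) * ∏ j ∈ Finset.univ.erase i, σ j (a j) := by
    intro b a
    rw [← Finset.mul_prod_erase Finset.univ _ (Finset.mem_univ i)]
    congr 1
    · simp [Function.update_self, pureStrat]
    · exact Finset.prod_congr rfl fun j hj =>
        by rw [Function.update_of_ne (Finset.mem_erase.1 hj).1]
  symm
  calc ∑ b, σ i b * expUtil u i (Function.update σ i (pureStrat b))
      = ∑ b, ∑ a : ∀ j, A j,
          (if a i = b then σ i b * ((∏ j ∈ Finset.univ.erase i, σ j (a j)) * u i a) else 0) := by
        refine Finset.sum_congr rfl fun b _ => ?_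
        rw [expUtil, Finset.mul_sum]
        refine Finset.sum_congr rfl fun a _ => ?_
        rw [hprod b a]
        split <;> ring
    _ = ∑ a : ∀ j, A j, ∑ b,
          (if a i = b then σ i b * ((∏ j ∈ Finset.univ.erase i, σ j (a j)) * u i a) else 0) :=
        Finset.sum_comm
    _ = ∑ a : ∀ j, A j, σ i (a i) * ((∏ j ∈ Finset.univ.erase i, σ j (a j)) * u i a) := by
        refine Finset.sum_congr rfl fun a _ => ?_
        simp
    _ = expUtil u i σ := by
        refine Finset.sum_congr rfl fun a _ => ?_
        rw [← mul_assoc, Finset.mul_prod_erase Finset.univ (fun j => σ j (a j)) (Finset.mem_univ i)]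

lemma nashApr_nonneg (hu : ∀ i a, u i a ∈ Set.Icc (0:ℝ) 1) (hσ : IsMixedProfile σ) :
    0 ≤ nashApr σ u := by
  obtain ⟨i⟩ := ‹Nonempty N›
  set E : A i → ℝ := fun b => expUtil u i (Function.update σ i (pureStrat b)) with hE
  have key : expUtil u i σ ≤ Finset.univ.sup' Finset.univ_nonempty E := by
    rw [expUtil_eq_sum i]
    calc ∑ b, σ i b * E b
        ≤ ∑ b, σ i b * Finset.univ.sup' Finset.univ_nonempty E :=
          Finset.sum_le_sum fun b _ => mul_le_mul_of_nonneg_left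
            (Finset.le_sup' E (Finset.mem_univ b)) (hσ.1 i b)
      _ = Finset.univ.sup' Finset.univ_nonempty E := by
          rw [← Finset.sum_mul, hσ.2 i, one_mul]
  obtain ⟨b, -, hb⟩ := Finset.exists_mem_eq_sup' (Finset.univ_nonempty (α := A i)) E
  refine le_trans ?_ (Finset.le_sup' _ (Finset.mem_univ i))
  refine le_trans ?_ (Finset.le_sup' _ (Finset.mem_univ b))
  have : expUtil u i σ ≤ E b := hb ▸ key
  simpa [E] using sub_nonneg.2 this

lemma nashApr_le_one (hu : ∀ i a, u i a ∈ Set.Icc (0:ℝ) 1) (hσ : IsMixedProfile σ) :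
    nashApr σ u ≤ 1 := by
  refine Finset.sup'_le _ _ fun i _ => Finset.sup'_le _ _ fun b _ => ?_
  have h1 := expUtil_le_one hu (isMixed_update hσ i b) i
  have h2 := expUtil_nonneg hu hσ i
  linarith

end GameAux

section LipschitzAux
variable {N : Type*} {A : N → Type*} [Fintype N] [DecidableEq N] [Nonempty N]
  [∀ i, Fintype (A i)] [∀ i, DecidableEq (A i)] [∀ i, Nonempty (A i)]
  {u : N → (∀ j, A j) → ℝ} {σ σ' : ∀ i, A i → ℝ}

lemma tv_bound (hσ : IsMixedProfile σ) (hσ' : IsMixedProfile σ') :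
    ∑ a : ∀ j, A j, |(∏ j, σ j (a j)) - ∏ j, σ' j (a j)| ≤ dist1 σ σ' := by
  have main : ∀ s : Finset N,
      ∑ a : ∀ j, A j,
          |(∏ j ∈ s, σ j (a j)) - ∏ j ∈ s, σ' j (a j)| * ∏ j ∈ sᶜ, σ j (a j)
        ≤ ∑ j ∈ s, ∑ b, |σ j b - σ' j b| := by
    intro s
    induction s using Finset.induction with
    | empty => simp
    | @insert i s hi ih =>
      have habs : ∀ a : ∀ j, A j,
          |(∏ j ∈ insert i s, σ j (a j)) - ∏ j ∈ insert i s, σ' j (a j)|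
            ≤ σ i (a i) * |(∏ j ∈ s, σ j (a j)) - ∏ j ∈ s, σ' j (a j)|
              + |σ i (a i) - σ' i (a i)| * ∏ j ∈ s, σ' j (a j) := by
        intro a
        rw [Finset.prod_insert hi, Finset.prod_insert hi]
        have h1 : σ i (a i) * ∏ j ∈ s, σ j (a j) - σ' i (a i) * ∏ j ∈ s, σ' j (a j)
            = σ i (a i) * ((∏ j ∈ s, σ j (a j)) - ∏ j ∈ s, σ' j (a j))
              + (σ i (a i) - σ' i (a i)) * ∏ j ∈ s, σ' j (a j) := by ring
        rw [h1]
        refine le_trans (abs_add_le _ _) ?_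
        rw [abs_mul, abs_mul, abs_of_nonneg (hσ.1 i (a i)),
          abs_of_nonneg (Finset.prod_nonneg fun j _ => hσ'.1 j (a j))]
      have hins : ∀ a : ∀ j, A j,
          σ i (a i) * ∏ j ∈ (insert i s)ᶜ, σ j (a j) = ∏ j ∈ sᶜ, σ j (a j) := by
        intro a
        rw [Finset.compl_insert]
        exact Finset.mul_prod_erase sᶜ (fun j => σ j (a j)) (Finset.mem_compl.2 hi)
      calc ∑ a : ∀ j, A j,
              |(∏ j ∈ insert i s, σ j (a j)) - ∏ j ∈ insert i s, σ' j (a j)|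
                * ∏ j ∈ (insert i s)ᶜ, σ j (a j)
          ≤ ∑ a : ∀ j, A j,
              (σ i (a i) * |(∏ j ∈ s, σ j (a j)) - ∏ j ∈ s, σ' j (a j)|
                + |σ i (a i) - σ' i (a i)| * ∏ j ∈ s, σ' j (a j))
                * ∏ j ∈ (insert i s)ᶜ, σ j (a j) := by
            refine Finset.sum_le_sum fun a _ => ?_
            exact mul_le_mul_of_nonneg_right (habs a)
              (Finset.prod_nonneg fun j _ => hσ.1 j (a j))
        _ = (∑ a : ∀ j, A j,
              |(∏ j ∈ s, σ j (a j)) - ∏ j ∈ s, σ' j (a j)| * ∏ j ∈ sᶜ, σ j (a j))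
            + ∑ a : ∀ j, A j,
              |σ i (a i) - σ' i (a i)| * (∏ j ∈ s, σ' j (a j))
                * ∏ j ∈ (insert i s)ᶜ, σ j (a j) := by
            rw [← Finset.sum_add_distrib]
            refine Finset.sum_congr rfl fun a _ => ?_
            rw [← hins a]; ring
        _ ≤ (∑ j ∈ s, ∑ b, |σ j b - σ' j b|) + ∑ b, |σ i b - σ' i b| := by
            refine add_le_add ih (le_of_eq ?_)
            -- factorize via sum_prod_pi
            set F : ∀ j, A j → ℝ :=
              Function.update (fun j => if j ∈ s then σ' j else σ j) i
                (fun b => |σ i b - σ' i b|) with hF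
            have hsplit : Finset.univ.erase i = s ∪ (insert i s)ᶜ := by
              ext j
              simp only [Finset.mem_erase, Finset.mem_univ, and_true, Finset.mem_union,
                Finset.mem_compl, Finset.mem_insert]
              constructor
              · intro hj; by_cases hjs : j ∈ s
                · exact Or.inl hjs
                · exact Or.inr (by tauto)
              · rintro (hjs | hjs)
                · exact fun h => hi (h ▸ hjs)
                · tauto
            have hdisj : Disjoint s (insert i s)ᶜ := by
              exact Finset.disjoint_left.2 fun j hj hc =>
                (Finset.mem_compl.1 hc) (Finset.mem_insert_of_mem hj)
            have hFprod : ∀ a : ∀ j, A j,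
                |σ i (a i) - σ' i (a i)| * (∏ j ∈ s, σ' j (a j))
                  * ∏ j ∈ (insert i s)ᶜ, σ j (a j) = ∏ j, F j (a j) := by
              intro a
              rw [← Finset.mul_prod_erase Finset.univ (fun j => F j (a j)) (Finset.mem_univ i)]
              have h1 : F i (a i) = |σ i (a i) - σ' i (a i)| := by
                simp [hF, Function.update_self]
              have h2 : ∏ j ∈ Finset.univ.erase i, F j (a j)
                  = (∏ j ∈ s, σ' j (a j)) * ∏ j ∈ (insert i s)ᶜ, σ j (a j) := by
                rw [hsplit, Finset.prod_union hdisj]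
                congr 1
                · refine Finset.prod_congr rfl fun j hj => ?_
                  have hji : j ≠ i := fun h => hi (h ▸ hj)
                  simp [hF, Function.update_of_ne hji, hj]
                · refine Finset.prod_congr rfl fun j hj => ?_
                  have hmem := Finset.mem_compl.1 hj
                  have hji : j ≠ i := fun h => hmem (h ▸ Finset.mem_insert_self i s)
                  have hjs : j ∉ s := fun h => hmem (Finset.mem_insert_of_mem h)
                  simp [hF, Function.update_of_ne hji, hjs]
              rw [h1, h2, mul_assoc]
            have hFsum : ∀ j, j ≠ i → ∑ b, F j b = 1 := by
              intro j hj
              by_cases hjs : j ∈ s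
              · simp [hF, Function.update_of_ne hj, hjs, hσ'.2 j]
              · simp [hF, Function.update_of_ne hj, hjs, hσ.2 j]
            calc ∑ a : ∀ j, A j,
                  |σ i (a i) - σ' i (a i)| * (∏ j ∈ s, σ' j (a j))
                    * ∏ j ∈ (insert i s)ᶜ, σ j (a j)
                = ∑ a : ∀ j, A j, ∏ j, F j (a j) :=
                  Finset.sum_congr rfl fun a _ => hFprod a
              _ = ∏ j, ∑ b, F j b := sum_prod_pi F
              _ = ∑ b, |σ i b - σ' i b| := by
                  rw [← Finset.mul_prod_erase Finset.univ (fun j => ∑ b, F j b)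
                    (Finset.mem_univ i)]
                  rw [Finset.prod_congr rfl fun j hj => hFsum j (Finset.mem_erase.1 hj).1]
                  simp [hF, Function.update_self]
        _ = ∑ j ∈ insert i s, ∑ b, |σ j b - σ' j b| := by
            rw [Finset.sum_insert hi]; ring
  have h := main Finset.univ
  simpa [Finset.compl_univ, dist1] using h

end LipschitzAux

section LipAux2
variable {N : Type*} {A : N → Type*} [Fintype N] [DecidableEq N] [Nonempty N]
  [∀ i, Fintype (A i)] [∀ i, DecidableEq (A i)] [∀ i, Nonempty (A i)]
  {u : N → (∀ j, A j) → ℝ} {σ σ' : ∀ i, A i → ℝ}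

lemma dist1_nonneg : 0 ≤ dist1 σ σ' :=
  Finset.sum_nonneg fun i _ => Finset.sum_nonneg fun a _ => abs_nonneg _

lemma dist1_comm : dist1 σ σ' = dist1 σ' σ := by
  unfold dist1
  refine Finset.sum_congr rfl fun i _ => Finset.sum_congr rfl fun a _ => abs_sub_comm _ _

lemma expUtil_lipschitz (hu : ∀ i a, u i a ∈ Set.Icc (0:ℝ) 1)
    (hσ : IsMixedProfile σ) (hσ' : IsMixedProfile σ') (i : N) :
    |expUtil u i σ - expUtil u i σ'| ≤ dist1 σ σ' := by
  have h1 : expUtil u i σ - expUtil u i σ'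
      = ∑ a : ∀ j, A j, ((∏ j, σ j (a j)) - ∏ j, σ' j (a j)) * u i a := by
    unfold expUtil
    rw [← Finset.sum_sub_distrib]
    exact Finset.sum_congr rfl fun a _ => by ring
  rw [h1]
  refine le_trans (Finset.abs_sum_le_sum_abs _ _) ?_
  refine le_trans ?_ (tv_bound hσ hσ')
  refine Finset.sum_le_sum fun a _ => ?_
  rw [abs_mul]
  have hua : |u i a| ≤ 1 := abs_le.2 ⟨by linarith [(hu i a).1], (hu i a).2⟩
  calc |(∏ j, σ j (a j)) - ∏ j, σ' j (a j)| * |u i a|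
      ≤ |(∏ j, σ j (a j)) - ∏ j, σ' j (a j)| * 1 :=
        mul_le_mul_of_nonneg_left hua (abs_nonneg _)
    _ = _ := mul_one _

lemma dist1_update_le (i : N) (b : A i) :
    dist1 (Function.update σ i (pureStrat b)) (Function.update σ' i (pureStrat b))
      ≤ dist1 σ σ' := by
  unfold dist1
  refine Finset.sum_le_sum fun j _ => ?_
  rcases eq_or_ne j i with rfl | hj
  · simp only [Function.update_self, sub_self, abs_zero, Finset.sum_const_zero]
    exact Finset.sum_nonneg fun a _ => abs_nonneg _
  · simp [Function.update_of_ne hj]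

lemma nashApr_sub_le (hu : ∀ i a, u i a ∈ Set.Icc (0:ℝ) 1)
    (hσ : IsMixedProfile σ) (hσ' : IsMixedProfile σ') :
    nashApr σ u - nashApr σ' u ≤ 2 * dist1 σ σ' := by
  rw [sub_le_iff_le_add]
  refine Finset.sup'_le _ _ fun i _ => Finset.sup'_le _ _ fun b _ => ?_
  have h1 : |expUtil u i (Function.update σ i (pureStrat b))
      - expUtil u i (Function.update σ' i (pureStrat b))|
      ≤ dist1 σ σ' :=
    le_trans (expUtil_lipschitz hu (isMixed_update hσ i b) (isMixed_update hσ' i b) i)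
      (dist1_update_le i b)
  have h2 : |expUtil u i σ - expUtil u i σ'| ≤ dist1 σ σ' := expUtil_lipschitz hu hσ hσ' i
  have h3 : expUtil u i (Function.update σ' i (pureStrat b)) - expUtil u i σ'
      ≤ nashApr σ' u := by
    refine le_trans ?_ (Finset.le_sup' _ (Finset.mem_univ i))
    exact Finset.le_sup' (fun c => expUtil u i (Function.update σ' i (pureStrat c))
      - expUtil u i σ') (Finset.mem_univ b)
  have e1 := abs_le.1 h1
  have e2 := abs_le.1 h2
  have := e1.2; have := e2.1
  nlinarith [e1.2, e2.1, h3]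

lemma nashApr_lipschitz (hu : ∀ i a, u i a ∈ Set.Icc (0:ℝ) 1)
    (hσ : IsMixedProfile σ) (hσ' : IsMixedProfile σ') :
    |nashApr σ u - nashApr σ' u| ≤ 2 * dist1 σ σ' := by
  rw [abs_le]
  constructor
  · have := nashApr_sub_le hu hσ' hσ
    rw [dist1_comm (σ := σ') (σ' := σ)] at this
    linarith
  · exact nashApr_sub_le hu hσ hσ'

end LipAux2

section LossAux
variable {N : Type*} {A : N → Type*} [Fintype N] [DecidableEq N] [Nonempty N]
  [∀ i, Fintype (A i)] [∀ i, DecidableEq (A i)] [∀ i, Nonempty (A i)]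

lemma nashLoss_nonneg (h : NEApprox N A) (u : GameUtil N A) : 0 ≤ nashLoss h u :=
  nashApr_nonneg u.2 (h.2 u)

lemma nashLoss_le_one (h : NEApprox N A) (u : GameUtil N A) : nashLoss h u ≤ 1 :=
  nashApr_le_one u.2 (h.2 u)

lemma nashLoss_close {h g : NEApprox N A} {r : ℝ}
    (hd : ∀ u, dist1 (h.1 u) (g.1 u) ≤ r) (u : GameUtil N A) :
    |nashLoss h u - nashLoss g u| ≤ 2 * r := by
  refine le_trans (nashApr_lipschitz u.2 (h.2 u) (g.2 u)) ?_
  linarith [hd u]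

end LossAux

section HoeffdingAux
open Real

lemma hoeffding_poly {p s : ℝ} (hp0 : 0 ≤ p) (hp1 : p ≤ 1) (hs : 0 ≤ s) :
    1 - p + p * Real.exp s ≤ Real.exp (s * p + s ^ 2 / 8) := by
  rcases eq_or_lt_of_le hp1 with h1 | hp1
  · rw [h1]
    have : Real.exp s ≤ Real.exp (s * 1 + s ^ 2 / 8) := by
      rw [Real.exp_le_exp]; nlinarith [sq_nonneg s]
    linarith
  rcases eq_or_lt_of_le hp0 with h0 | hp0
  · rw [← h0]
    have : (1 : ℝ) ≤ Real.exp (s * 0 + s ^ 2 / 8) :=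
      Real.one_le_exp (by positivity)
    linarith
  -- now 0 < p < 1
  set d : ℝ → ℝ := fun x => 1 - p + p * Real.exp x with hd
  have hdpos : ∀ x, 0 < d x := fun x => by
    have := Real.exp_pos x
    simp only [hd]; nlinarith
  have hdd : ∀ x, HasDerivAt d (p * Real.exp x) x := fun x => by
    exact ((Real.hasDerivAt_exp x).const_mul p).const_add (1 - p)
  set g' : ℝ → ℝ := fun x => p + x / 4 - p * Real.exp x / d x with hg'def
  set g : ℝ → ℝ := fun x => x * p + x ^ 2 / 8 - Real.log (d x) with hgdef
  have hg : ∀ x, HasDerivAt g (g' x) x := by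
    intro x
    have h1 : HasDerivAt (fun x : ℝ => x * p + x ^ 2 / 8) (p + x / 4) x := by
      have ha : HasDerivAt (fun x : ℝ => x * p) p x := by
        simpa using (hasDerivAt_id x).mul_const p
      have hb : HasDerivAt (fun x : ℝ => x ^ 2 / 8) (x / 4) x := by
        have := (hasDerivAt_pow 2 x).div_const 8
        simpa using this.congr_deriv (by ring)
      exact ha.add hb
    have h2 : HasDerivAt (fun x => Real.log (d x)) (p * Real.exp x / d x) x :=
      (hdd x).log (hdpos x).ne'
    exact h1.sub h2
  have hg' : ∀ x, HasDerivAt g' (1 / 4 - p * Real.exp x * (1 - p) / (d x) ^ 2) x := by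
    intro x
    have h1 : HasDerivAt (fun x : ℝ => p + x / 4) (1 / 4) x := by
      simpa using ((hasDerivAt_id x).div_const 4).const_add p
    have h2 : HasDerivAt (fun x => p * Real.exp x / d x)
        ((p * Real.exp x * d x - p * Real.exp x * (p * Real.exp x)) / (d x) ^ 2) x :=
      ((Real.hasDerivAt_exp x).const_mul p).div (hdd x) (hdpos x).ne'
    have h3 := h1.sub h2
    have heq : 1 / 4 - (p * Real.exp x * d x - p * Real.exp x * (p * Real.exp x)) / (d x) ^ 2
        = 1 / 4 - p * Real.exp x * (1 - p) / (d x) ^ 2 := by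
      congr 1
      have : p * Real.exp x * d x - p * Real.exp x * (p * Real.exp x)
          = p * Real.exp x * (1 - p) := by simp only [hd]; ring
      rw [this]
    rw [heq] at h3
    exact h3
  have hg'nonneg : ∀ x, 0 ≤ 1 / 4 - p * Real.exp x * (1 - p) / (d x) ^ 2 := by
    intro x
    have hdx := hdpos x
    have he := Real.exp_pos x
    rw [sub_nonneg, div_le_iff₀ (by positivity)]
    have : d x = 1 - p + p * Real.exp x := rfl
    nlinarith [sq_nonneg (p * Real.exp x - (1 - p))]
  have hg'mono : Monotone g' := by
    refine monotone_of_deriv_nonneg (fun x => (hg' x).differentiableAt) fun x => ?_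
    rw [(hg' x).deriv]
    exact hg'nonneg x
  have hg'0 : g' 0 = 0 := by
    simp only [hg'def, hd, Real.exp_zero, mul_one]
    field_simp
    ring
  have hgmono : MonotoneOn g (Set.Ici 0) := by
    refine monotoneOn_of_deriv_nonneg (convex_Ici 0)
      (Continuous.continuousOn ?_) (fun x _ => (hg x).differentiableAt.differentiableWithinAt)
      fun x hx => ?_
    · exact continuous_iff_continuousAt.2 fun x => (hg x).differentiableAt.continuousAt
    · rw [(hg x).deriv]
      have hx0 : (0 : ℝ) ≤ x := le_of_lt (by simpa using hx)
      calc (0 : ℝ) = g' 0 := hg'0.symm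
        _ ≤ g' x := hg'mono hx0
  have hg0 : g 0 = 0 := by
    simp [hgdef, hd, Real.exp_zero]
  have hgs : 0 ≤ g s := by
    have := hgmono (Set.self_mem_Ici) (Set.mem_Ici.2 hs) hs
    rw [hg0] at this
    exact this
  have hlog : Real.log (d s) ≤ s * p + s ^ 2 / 8 := by
    simp only [hgdef] at hgs; linarith
  have := (Real.log_le_iff_le_exp (hdpos s)).1 hlog
  simpa [hd] using this

end HoeffdingAux

section TailAux
open Real ProbabilityTheory

variable {α : Type*} [MeasurableSpace α]

lemma integrable_bdd (D : Measure α) [IsFiniteMeasure D] {f : α → ℝ}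
    (hf : Measurable f) (C : ℝ) (h : ∀ x, |f x| ≤ C) : Integrable f D := by
  refine ⟨hf.aestronglyMeasurable, ?_⟩
  apply MeasureTheory.HasFiniteIntegral.of_bounded (C := C)
  exact MeasureTheory.ae_of_all _ (by simpa [Real.norm_eq_abs] using h)

lemma integral_exp_le (D : Measure α) [IsProbabilityMeasure D] {f : α → ℝ}
    (hf : Measurable f) (h0 : ∀ x, 0 ≤ f x) (h1 : ∀ x, f x ≤ 1) {s : ℝ} (hs : 0 ≤ s) :
    ∫ x, Real.exp (s * f x) ∂D ≤ Real.exp (s * (∫ x, f x ∂D) + s ^ 2 / 8) := by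
  have hint : Integrable f D := integrable_bdd D hf 1 fun x => abs_le.2 ⟨by linarith [h0 x], h1 x⟩
  have hμ0 : 0 ≤ ∫ x, f x ∂D := MeasureTheory.integral_nonneg h0
  have hμ1 : (∫ x, f x ∂D) ≤ 1 := by
    calc (∫ x, f x ∂D) ≤ ∫ _, (1 : ℝ) ∂D := MeasureTheory.integral_mono hint
          (MeasureTheory.integrable_const 1) h1
      _ = 1 := by simp
  have hstep : ∀ x, Real.exp (s * f x) ≤ 1 - f x + f x * Real.exp s := by
    intro x
    have := convexOn_exp.2 (Set.mem_univ (0 : ℝ)) (Set.mem_univ s)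
      (sub_nonneg.2 (h1 x)) (h0 x) (by ring)
    simpa [smul_eq_mul, mul_comm] using this
  have hintexp : Integrable (fun x => Real.exp (s * f x)) D := by
    refine integrable_bdd D (Real.measurable_exp.comp (hf.const_mul s)) (Real.exp s) fun x => ?_
    rw [abs_of_pos (Real.exp_pos _), Real.exp_le_exp]
    calc s * f x ≤ s * 1 := mul_le_mul_of_nonneg_left (h1 x) hs
      _ = s := mul_one s
  calc ∫ x, Real.exp (s * f x) ∂D
      ≤ ∫ x, (1 - f x + f x * Real.exp s) ∂D := by
        refine MeasureTheory.integral_mono hintexp ?_ hstep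
        exact ((MeasureTheory.integrable_const 1).sub hint).add (hint.mul_const _)
    _ = 1 - (∫ x, f x ∂D) + (∫ x, f x ∂D) * Real.exp s := by
        have hA : Integrable (fun x => 1 - f x) D := (MeasureTheory.integrable_const 1).sub hint
        have hB : Integrable (fun x => f x * Real.exp s) D := hint.mul_const _
        rw [MeasureTheory.integral_add hA hB, MeasureTheory.integral_mul_const]
        have : (∫ x, (1 - f x) ∂D) = 1 - ∫ x, f x ∂D := by
          rw [MeasureTheory.integral_sub (MeasureTheory.integrable_const 1) hint]
          simp
        rw [this]
    _ ≤ Real.exp (s * (∫ x, f x ∂D) + s ^ 2 / 8) := hoeffding_poly hμ0 hμ1 hs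

lemma hoeffding_tail (D : Measure α) [IsProbabilityMeasure D] {f : α → ℝ}
    (hf : Measurable f) (h0 : ∀ x, 0 ≤ f x) (h1 : ∀ x, f x ≤ 1)
    {m : ℕ} (hm : 1 ≤ m) {t : ℝ} (ht : 0 < t) :
    (MeasureTheory.Measure.pi fun _ : Fin m => D)
        {S : Fin m → α | (m : ℝ) * ((∫ x, f x ∂D) + t) ≤ ∑ j, f (S j)}
      ≤ ENNReal.ofReal (Real.exp (-(2 * m * t ^ 2))) := by
  letI : MeasureSpace α := ⟨D⟩
  have hvol : (volume : Measure α) = D := rfl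
  haveI : SigmaFinite (volume : Measure α) := by rw [hvol]; infer_instance
  haveI : IsProbabilityMeasure (volume : Measure α) := by rw [hvol]; infer_instance
  set μm := MeasureTheory.Measure.pi fun _ : Fin m => D with hμm
  haveI : IsProbabilityMeasure μm := by
    rw [hμm]; infer_instance
  have hvolpi : (volume : Measure (Fin m → α)) = μm := by
    rw [MeasureTheory.volume_pi, hμm]
    rfl
  set s : ℝ := 4 * t with hsdef
  have hs : 0 ≤ s := by positivity
  set X : (Fin m → α) → ℝ := fun S => ∑ j, f (S j) with hX
  have hexpprod : ∀ S : Fin m → α,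
      Real.exp (s * X S) = ∏ j, Real.exp (s * f (S j)) := by
    intro S
    rw [hX, Finset.mul_sum, Real.exp_sum]
  have hint1 : Integrable (fun x => Real.exp (s * f x)) D := by
    refine integrable_bdd D (Real.measurable_exp.comp (hf.const_mul s)) (Real.exp s) fun x => ?_
    rw [abs_of_pos (Real.exp_pos _), Real.exp_le_exp]
    calc s * f x ≤ s * 1 := mul_le_mul_of_nonneg_left (h1 x) hs
      _ = s := mul_one s
  have hXint : Integrable (fun S => Real.exp (s * X S)) μm := by
    simp_rw [hexpprod]
    rw [← hvolpi]
    exact MeasureTheory.Integrable.fintype_prod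
      (f := fun _ : Fin m => fun x => Real.exp (s * f x))
      fun j => by rw [hvol]; exact hint1
  have hmgf : mgf X μm s ≤ Real.exp (s * (∫ x, f x ∂D) + s ^ 2 / 8) ^ m := by
    have h1' : mgf X μm s = (∫ x, Real.exp (s * f x) ∂D) ^ m := by
      rw [mgf]
      simp_rw [hexpprod]
      rw [← hvolpi, ← hvol]
      rw [MeasureTheory.volume_pi, MeasureTheory.integral_fintype_prod_eq_pow (fun x => Real.exp (s * f x))]
      simp
    rw [h1']
    exact pow_le_pow_left₀ (MeasureTheory.integral_nonneg fun x => (Real.exp_pos _).le)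
      (integral_exp_le D hf h0 h1 hs) m
  have hch := ProbabilityTheory.measure_ge_le_exp_mul_mgf
    (μ := μm) (X := X) (t := s) ((m : ℝ) * ((∫ x, f x ∂D) + t)) hs hXint
  have hbound : Real.exp (-s * ((m : ℝ) * ((∫ x, f x ∂D) + t))) * mgf X μm s
      ≤ Real.exp (-(2 * m * t ^ 2)) := by
    calc Real.exp (-s * ((m : ℝ) * ((∫ x, f x ∂D) + t))) * mgf X μm s
        ≤ Real.exp (-s * ((m : ℝ) * ((∫ x, f x ∂D) + t)))
            * Real.exp (s * (∫ x, f x ∂D) + s ^ 2 / 8) ^ m :=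
          mul_le_mul_of_nonneg_left hmgf (Real.exp_pos _).le
      _ = Real.exp (-(2 * m * t ^ 2)) := by
          rw [← Real.exp_nat_mul, ← Real.exp_add, Real.exp_eq_exp, hsdef]
          ring
  have htoReal : (μm {S | (m : ℝ) * ((∫ x, f x ∂D) + t) ≤ X S}).toReal
      ≤ Real.exp (-(2 * m * t ^ 2)) := le_trans hch hbound
  have hfin : μm {S | (m : ℝ) * ((∫ x, f x ∂D) + t) ≤ X S} ≠ ⊤ :=
    (MeasureTheory.measure_lt_top _ _).ne
  calc μm {S : Fin m → α | (m : ℝ) * ((∫ x, f x ∂D) + t) ≤ ∑ j, f (S j)}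
      = ENNReal.ofReal ((μm {S | (m : ℝ) * ((∫ x, f x ∂D) + t) ≤ X S}).toReal) :=
        (ENNReal.ofReal_toReal hfin).symm
    _ ≤ ENNReal.ofReal (Real.exp (-(2 * m * t ^ 2))) := ENNReal.ofReal_le_ofReal htoReal

end TailAux

section RiskAux
variable {N : Type*} {A : N → Type*} [Fintype N] [DecidableEq N] [Nonempty N]
  [∀ i, Fintype (A i)] [∀ i, DecidableEq (A i)] [∀ i, Nonempty (A i)]

lemma empRisk_close {m : ℕ} (hm : 1 ≤ m) (S : Fin m → GameUtil N A)
    {h g : NEApprox N A} {r : ℝ}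
    (hc : ∀ u, |nashLoss h u - nashLoss g u| ≤ r) :
    |empRisk S h - empRisk S g| ≤ r := by
  have hm0 : (0 : ℝ) < m := by exact_mod_cast Nat.lt_of_lt_of_le Nat.zero_lt_one hm
  have hr : 0 ≤ r := le_trans (abs_nonneg _) (hc (S ⟨0, hm⟩))
  unfold empRisk
  rw [← mul_sub, ← Finset.sum_sub_distrib, abs_mul]
  rw [abs_of_pos (by positivity : (0:ℝ) < 1 / (m:ℝ))]
  calc 1 / (m:ℝ) * |∑ j, (nashLoss h (S j) - nashLoss g (S j))|
      ≤ 1 / (m:ℝ) * ∑ j, |nashLoss h (S j) - nashLoss g (S j)| := by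
        refine mul_le_mul_of_nonneg_left (Finset.abs_sum_le_sum_abs _ _) (by positivity)
    _ ≤ 1 / (m:ℝ) * ∑ _j : Fin m, r := by
        refine mul_le_mul_of_nonneg_left (Finset.sum_le_sum fun j _ => hc (S j)) (by positivity)
    _ = r := by
        rw [Finset.sum_const, Finset.card_univ, Fintype.card_fin, nsmul_eq_mul]
        field_simp

lemma trueRisk_close (D : Measure (GameUtil N A)) [IsProbabilityMeasure D]
    {h g : NEApprox N A} {r : ℝ}
    (ih : Integrable (nashLoss h) D) (ig : Integrable (nashLoss g) D)
    (hc : ∀ u, |nashLoss h u - nashLoss g u| ≤ r) :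
    |trueRisk D h - trueRisk D g| ≤ r := by
  unfold trueRisk
  rw [← MeasureTheory.integral_sub ih ig]
  have habs : |∫ u, (nashLoss h u - nashLoss g u) ∂D|
      ≤ ∫ u, |nashLoss h u - nashLoss g u| ∂D := by
    simpa [Real.norm_eq_abs] using
      MeasureTheory.norm_integral_le_integral_norm (fun u => nashLoss h u - nashLoss g u) (μ := D)
  refine le_trans habs ?_
  calc ∫ u, |nashLoss h u - nashLoss g u| ∂D
      ≤ ∫ _, r ∂D := MeasureTheory.integral_mono (ih.sub ig).abs
        (MeasureTheory.integrable_const r) hc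
    _ = r := by simp

end RiskAux
theorem uniform_deviation_probability_bound
    {N : Type*} [Fintype N] [DecidableEq N] [Nonempty N]
    {A : N → Type*} [∀ i, Fintype (A i)] [∀ i, DecidableEq (A i)] [∀ i, Nonempty (A i)]
    (H : Set (NEApprox N A)) (hH : H.Nonempty)
    (hHmeas : ∀ h ∈ H, Measurable (nashLoss h))
    (D : Measure (GameUtil N A)) [IsProbabilityMeasure D]
    {m : ℕ} (hm : 1 ≤ m) (ε : ℝ) (hε : ε ∈ Set.Ioo (0 : ℝ) 1)
    (C : Finset (NEApprox N A)) (hC : C.Nonempty) (K : ℕ) (hK : C.card = K)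
    (hCmeas : ∀ g ∈ C, Measurable (nashLoss g))
    (hcover : Covers (ε / 6) C H)
    (hsetmeas : MeasurableSet
      {S : Fin m → GameUtil N A | ∃ h ∈ H, |empRisk S h - trueRisk D h| > ε}) :
    (MeasureTheory.Measure.pi fun _ : Fin m => D)
        {S : Fin m → GameUtil N A | ∃ h ∈ H, |empRisk S h - trueRisk D h| > ε} ≤
      ENNReal.ofReal (2 * K * Real.exp (-(2 * m * ε ^ 2) / 9)) := by
  classical
  obtain ⟨hε0, hε1⟩ := hε
  set μm := MeasureTheory.Measure.pi fun _ : Fin m => D with hμm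
  set Tp : NEApprox N A → Set (Fin m → GameUtil N A) := fun g =>
    {S | (m : ℝ) * ((∫ u, nashLoss g u ∂D) + ε / 3) ≤ ∑ j, nashLoss g (S j)} with hTp
  set Tm : NEApprox N A → Set (Fin m → GameUtil N A) := fun g =>
    {S | (m : ℝ) * ((∫ u, (1 - nashLoss g u) ∂D) + ε / 3) ≤ ∑ j, (1 - nashLoss g (S j))}
    with hTm
  have hm0 : (0 : ℝ) < m := by exact_mod_cast Nat.lt_of_lt_of_le Nat.zero_lt_one hm
  -- Step 1: inclusion
  have hincl : {S : Fin m → GameUtil N A | ∃ h ∈ H, |empRisk S h - trueRisk D h| > ε}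
      ⊆ ⋃ g ∈ C, (Tp g ∪ Tm g) := by
    intro S hS
    obtain ⟨h, hh, hgt⟩ := hS
    obtain ⟨g, hgC, hdist⟩ := hcover h hh
    have hclose : ∀ u, |nashLoss h u - nashLoss g u| ≤ ε / 3 := by
      intro u
      have := nashLoss_close hdist u
      linarith
    have ih : Integrable (nashLoss h) D :=
      integrable_bdd D (hHmeas h hh) 1 fun u =>
        abs_le.2 ⟨by linarith [nashLoss_nonneg h u], nashLoss_le_one h u⟩
    have ig : Integrable (nashLoss g) D :=
      integrable_bdd D (hCmeas g hgC) 1 fun u =>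
        abs_le.2 ⟨by linarith [nashLoss_nonneg g u], nashLoss_le_one g u⟩
    have he : |empRisk S h - empRisk S g| ≤ ε / 3 := empRisk_close hm S hclose
    have ht : |trueRisk D h - trueRisk D g| ≤ ε / 3 := trueRisk_close D ih ig hclose
    have hg3 : ε / 3 < |empRisk S g - trueRisk D g| := by
      have e1 : empRisk S h - trueRisk D h
          = (empRisk S h - empRisk S g) + ((empRisk S g - trueRisk D g)
            + (trueRisk D g - trueRisk D h)) := by ring
      have key : |empRisk S h - trueRisk D h|
          ≤ |empRisk S h - empRisk S g| + (|empRisk S g - trueRisk D g|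
            + |trueRisk D g - trueRisk D h|) := by
        rw [e1]
        exact le_trans (abs_add_le _ _) (by gcongr; exact abs_add_le _ _)
      have htt : |trueRisk D g - trueRisk D h| ≤ ε / 3 := by
        rw [abs_sub_comm]; exact ht
      linarith
    have hemp : (m : ℝ) * empRisk S g = ∑ j, nashLoss g (S j) := by
      unfold empRisk
      field_simp
    have hTR : trueRisk D g = ∫ u, nashLoss g u ∂D := rfl
    refine Set.mem_iUnion.2 ⟨g, Set.mem_iUnion.2 ⟨hgC, ?_⟩⟩
    rcases lt_abs.1 hg3 with hcase | hcase
    · left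
      show (m : ℝ) * ((∫ u, nashLoss g u ∂D) + ε / 3) ≤ ∑ j, nashLoss g (S j)
      rw [← hemp, ← hTR]
      nlinarith
    · right
      show (m : ℝ) * ((∫ u, (1 - nashLoss g u) ∂D) + ε / 3) ≤ ∑ j, (1 - nashLoss g (S j))
      have hint1 : (∫ u, (1 - nashLoss g u) ∂D) = 1 - ∫ u, nashLoss g u ∂D := by
        rw [MeasureTheory.integral_sub (MeasureTheory.integrable_const 1) ig]
        simp
      have hsum1 : ∑ j : Fin m, (1 - nashLoss g (S j)) = m - ∑ j, nashLoss g (S j) := by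
        rw [Finset.sum_sub_distrib]
        simp
      rw [hint1, hsum1, ← hTR]
      have := hemp
      nlinarith
  -- Step 2: tail bounds for each g in C
  have hε3 : (0 : ℝ) < ε / 3 := by linarith
  set e : ℝ := Real.exp (-(2 * m * (ε / 3) ^ 2)) with he
  have htailp : ∀ g ∈ C, μm (Tp g) ≤ ENNReal.ofReal e := by
    intro g hg
    exact hoeffding_tail D (hCmeas g hg) (nashLoss_nonneg g) (nashLoss_le_one g) hm hε3
  have htailm : ∀ g ∈ C, μm (Tm g) ≤ ENNReal.ofReal e := by
    intro g hg
    exact hoeffding_tail D (measurable_const.sub (hCmeas g hg))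
      (fun u => by simp only [Pi.sub_apply]; linarith [nashLoss_le_one g u])
      (fun u => by simp only [Pi.sub_apply]; linarith [nashLoss_nonneg g u]) hm hε3
  -- Step 3: assemble
  have hexp : e = Real.exp (-(2 * m * ε ^ 2) / 9) := by
    rw [he]
    congr 1
    ring
  calc μm {S : Fin m → GameUtil N A | ∃ h ∈ H, |empRisk S h - trueRisk D h| > ε}
      ≤ μm (⋃ g ∈ C, (Tp g ∪ Tm g)) := measure_mono hincl
    _ ≤ ∑ g ∈ C, μm (Tp g ∪ Tm g) := measure_biUnion_finset_le C _
    _ ≤ ∑ g ∈ C, (ENNReal.ofReal e + ENNReal.ofReal e) := by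
        refine Finset.sum_le_sum fun g hg => ?_
        exact le_trans (measure_union_le _ _) (add_le_add (htailp g hg) (htailm g hg))
    _ = (K : ENNReal) * (ENNReal.ofReal e + ENNReal.ofReal e) := by
        rw [Finset.sum_const, hK, nsmul_eq_mul]
    _ = ENNReal.ofReal (2 * K * Real.exp (-(2 * m * ε ^ 2) / 9)) := by
        rw [← ENNReal.ofReal_add (Real.exp_pos _).le (Real.exp_pos _).le,
          ← ENNReal.ofReal_natCast K, ← ENNReal.ofReal_mul (Nat.cast_nonneg K)]
        congr 1
        have h9 : -(2 * (m:ℝ) * (ε / 3) ^ 2) = -(2 * (m:ℝ) * ε ^ 2) / 9 := by ring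
        rw [h9]
        ring
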